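/- arXiv:2403.12350 — 3 statements merged into one kernel-verified Lean document; each statement's English description precedes it below -/
import Mathlib

section
/- Let d ≥ 1, let L : ℝ^d → ℝ be differentiable with ∇L β-Lipschitz for some β > 0, and let P : ℝ^d → ℝ^d be any β-Lipschitz map. Let w, w' ∈ ℝ^d with ‖w' − w‖ ≤ ρ for some ρ ≥ 0, and let γ ≥ 0 satisfy β·γ ≤ 1. Set w⁺ := w − γ·P(w'). Then L(w⁺) ≤ L(w) − (γ²β/2)·‖∇L(w)‖² + γ²β·‖P(w') − ∇L(w')‖² + γ²β³ρ² − (1 − βγ)·γ·⟨∇L(w), P(w)⟩ + (1 − βγ)·γ·((1/2)·‖∇L(w)‖² + (1/2)·β²ρ²). -/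
open InnerProductSpace

lemma descent_lemma {E : Type*} [NormedAddCommGroup E] [InnerProductSpace ℝ E] [CompleteSpace E]
    (L : E → ℝ) (β : ℝ) (hβ : 0 ≤ β) (hdiff : Differentiable ℝ L)
    (hlip : LipschitzWith β.toNNReal (gradient L)) (x y : E) :
    L y ≤ L x + inner ℝ (gradient L x) (y - x) + β / 2 * ‖y - x‖ ^ 2 := by
  set v := y - x with hv
  set φ : ℝ → ℝ := fun t => L (x + t • v) - t * inner ℝ (gradient L x) v - β / 2 * t ^ 2 * ‖v‖ ^ 2
    with hφ
  have hline : ∀ t : ℝ, HasDerivAt (fun t : ℝ => x + t • v) v t := by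
    intro t
    simpa using ((hasDerivAt_id t).smul_const v).const_add x
  have hLd : ∀ t : ℝ, HasDerivAt (fun t : ℝ => L (x + t • v))
      (inner ℝ (gradient L (x + t • v)) v) t := by
    intro t
    have h1 : HasFDerivAt L (InnerProductSpace.toDual ℝ E (gradient L (x + t • v))) (x + t • v) :=
      (hdiff (x + t • v)).hasGradientAt.hasFDerivAt
    have := h1.comp_hasDerivAt t (hline t)
    simpa [InnerProductSpace.toDual_apply_apply, Function.comp_def] using this
  have hφd : ∀ t : ℝ, HasDerivAt φ
      ((inner ℝ (gradient L (x + t • v)) v : ℝ) - inner ℝ (gradient L x) v - β * t * ‖v‖ ^ 2) t := by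
    intro t
    have h2 : HasDerivAt (fun t : ℝ => t * (inner ℝ (gradient L x) v : ℝ))
        (inner ℝ (gradient L x) v) t := by
      simpa using (hasDerivAt_id t).mul_const (inner ℝ (gradient L x) v : ℝ)
    have h3 : HasDerivAt (fun t : ℝ => β / 2 * t ^ 2 * ‖v‖ ^ 2) (β * t * ‖v‖ ^ 2) t := by
      have := ((hasDerivAt_pow 2 t).const_mul (β / 2)).mul_const (‖v‖ ^ 2)
      refine this.congr_deriv ?_
      ring
    exact ((hLd t).sub h2).sub h3
  have key : φ 1 ≤ φ 0 := by
    have hanti : AntitoneOn φ (Set.Icc 0 1) := by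
      apply antitoneOn_of_deriv_nonpos (convex_Icc 0 1)
      · exact fun t _ => (hφd t).continuousAt.continuousWithinAt
      · intro t _
        exact ((hφd t).differentiableAt).differentiableWithinAt
      · intro t ht
        rw [(hφd t).deriv]
        simp only [interior_Icc, Set.mem_Ioo] at ht
        have hinner : (inner ℝ (gradient L (x + t • v)) v : ℝ) - inner ℝ (gradient L x) v
            ≤ β * t * ‖v‖ ^ 2 := by
          rw [← inner_sub_left]
          calc (inner ℝ (gradient L (x + t • v) - gradient L x) v : ℝ)
              ≤ ‖gradient L (x + t • v) - gradient L x‖ * ‖v‖ := real_inner_le_norm _ _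
            _ ≤ β * ‖t • v‖ * ‖v‖ := by
                gcongr
                have := hlip.dist_le_mul (x + t • v) x
                simpa [dist_eq_norm, add_sub_cancel_left, Real.coe_toNNReal _ hβ] using this
            _ = β * (|t| * ‖v‖) * ‖v‖ := by rw [norm_smul, Real.norm_eq_abs]
            _ = β * |t| * ‖v‖ ^ 2 := by ring
            _ ≤ β * t * ‖v‖ ^ 2 := by
                rw [abs_of_pos ht.1]
        linarith
    exact hanti (by norm_num) (by norm_num) (by norm_num)
  have h1 : φ 1 = L y - inner ℝ (gradient L x) v - β / 2 * ‖v‖ ^ 2 := by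
    simp [hφ, hv]
  have h0 : φ 0 = L x := by simp [hφ]
  rw [h1, h0] at key
  linarith


set_option maxHeartbeats 2000000 in
/-- The deterministic one-step inequality in the proof of Theorem 2 of the paper,
combining the descent chain and the Cauchy–Schwarz cross-term bound: for `L`
differentiable with β-Lipschitz gradient, any β-Lipschitz `P : ℝ^d → ℝ^d`,
points `w, w'` with `‖w' − w‖ ≤ ρ`, and `γ ≥ 0` with `βγ ≤ 1`, the update
`w⁺ = w − γ·P(w')` satisfies the stated bound. -/
theorem fsam_one_step_bound {d : ℕ} (hd : 1 ≤ d)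
    (L : EuclideanSpace ℝ (Fin d) → ℝ) (β : ℝ) (hβ : 0 < β)
    (hdiff : Differentiable ℝ L)
    (hlip : LipschitzWith β.toNNReal (gradient L))
    (P : EuclideanSpace ℝ (Fin d) → EuclideanSpace ℝ (Fin d))
    (hP : LipschitzWith β.toNNReal P)
    (w w' : EuclideanSpace ℝ (Fin d)) (ρ : ℝ) (hρ : 0 ≤ ρ) (hww' : ‖w' - w‖ ≤ ρ)
    (γ : ℝ) (hγ : 0 ≤ γ) (hβγ : β * γ ≤ 1) :
    L (w - γ • P w') ≤
      L w - (γ ^ 2 * β / 2) * ‖gradient L w‖ ^ 2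
        + γ ^ 2 * β * ‖P w' - gradient L w'‖ ^ 2
        + γ ^ 2 * β ^ 3 * ρ ^ 2
        - (1 - β * γ) * γ * (inner ℝ (gradient L w) (P w) : ℝ)
        + (1 - β * γ) * γ * ((1 / 2) * ‖gradient L w‖ ^ 2 + (1 / 2) * β ^ 2 * ρ ^ 2) := by
  classical
  set g := gradient L with hg
  set a : ℝ := ‖g w‖ with ha
  set e : ℝ := ‖P w' - g w'‖ with he
  set c : ℝ := ‖P w' - g w‖ with hc0
  set I : ℝ := inner ℝ (g w) (P w') with hI
  set J : ℝ := inner ℝ (g w) (P w) with hJ0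
  -- descent lemma
  have hstep := descent_lemma L β hβ.le hdiff hlip w (w - γ • P w')
  have hvv : (w - γ • P w') - w = -(γ • P w') := by abel
  rw [hvv] at hstep
  have hin : (inner ℝ (g w) (-(γ • P w')) : ℝ) = -(γ * I) := by
    rw [inner_neg_right, real_inner_smul_right]
  have hnn : ‖-(γ • P w')‖ ^ 2 = γ ^ 2 * ‖P w'‖ ^ 2 := by
    rw [norm_neg, norm_smul, Real.norm_eq_abs, abs_of_nonneg hγ, mul_pow]
  rw [hin, hnn] at hstep
  -- expansion
  have hPP : ‖P w'‖ ^ 2 = c ^ 2 + 2 * I - a ^ 2 := by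
    have := @norm_sub_sq_real _ _ _ (P w') (g w)
    rw [real_inner_comm] at this
    rw [hc0, this, ha, hI]
    ring
  rw [hPP] at hstep
  -- Lipschitz consequences
  have hPl : ‖P w' - P w‖ ≤ β * ρ := by
    have h := hP.dist_le_mul w' w
    simp only [dist_eq_norm, Real.coe_toNNReal _ hβ.le] at h
    exact h.trans (by nlinarith)
  have hgl : ‖g w' - g w‖ ≤ β * ρ := by
    have h := hlip.dist_le_mul w' w
    simp only [dist_eq_norm, Real.coe_toNNReal _ hβ.le] at h
    exact h.trans (by nlinarith)
  have hce : c ≤ e + β * ρ := by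
    calc c ≤ ‖P w' - g w'‖ + ‖g w' - g w‖ := norm_sub_le_norm_sub_add_norm_sub _ _ _
      _ ≤ e + β * ρ := by rw [he]; linarith
  have hc2 : c ^ 2 ≤ 2 * e ^ 2 + 2 * β ^ 2 * ρ ^ 2 := by
    nlinarith [norm_nonneg (P w' - g w), norm_nonneg (P w' - g w'), sq_nonneg (e - β * ρ)]
  have h8 : β * γ ^ 2 / 2 * c ^ 2 ≤ β * γ ^ 2 / 2 * (2 * e ^ 2 + 2 * β ^ 2 * ρ ^ 2) :=
    mul_le_mul_of_nonneg_left hc2 (by positivity)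
  have hIJ : J ≤ I + (a ^ 2 / 2 + β ^ 2 * ρ ^ 2 / 2) := by
    have h1 : J - I = inner ℝ (g w) (P w - P w') := by rw [hI, hJ0, inner_sub_right]
    have h2 : (inner ℝ (g w) (P w - P w') : ℝ) ≤ a * ‖P w - P w'‖ := real_inner_le_norm _ _
    have h3 : a * ‖P w - P w'‖ ≤ a * (β * ρ) := by
      rw [norm_sub_rev]
      exact mul_le_mul_of_nonneg_left hPl (norm_nonneg _)
    nlinarith [sq_nonneg (a - β * ρ)]
  have h9 : (1 - β * γ) * γ * J ≤ (1 - β * γ) * γ * (I + (a ^ 2 / 2 + β ^ 2 * ρ ^ 2 / 2)) :=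
    mul_le_mul_of_nonneg_left hIJ (mul_nonneg (by linarith) hγ)
  nlinarith [hstep, h8, h9]
end

section
/- Let d ≥ 1, λ ∈ (0,1), T ≥ 1 an integer, and define the weights w_t := λ^{T−t}(1−λ)/(1−λ^T) for t = 1,…,T. Let f : ℝ^d → ℝ^d be β-Lipschitz (β > 0), and let x_1,…,x_T ∈ ℝ^d satisfy ‖x_s − x_{s−1}‖ ≤ γ·G for all s = 2,…,T, where γ, G > 0. Then ‖Σ_{t=1}^T w_t·f(x_t) − f(x_T)‖ ≤ γ·G·β·λ/((1−λ)(1−λ^T)). -/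
/-- The EMA bias bound in the proof of Theorem 1 of the paper: for EMA weights
`w_t = λ^{T−t}(1−λ)/(1−λ^T)`, a β-Lipschitz map `f` and iterates with consecutive
steps of norm at most `γG`,
`‖Σ_{t=1}^T w_t f(x_t) − f(x_T)‖ ≤ γGβλ/((1−λ)(1−λ^T))`. -/
theorem ema_bias_bound {d : ℕ} (hd : 1 ≤ d)
    (lam : ℝ) (hlam : lam ∈ Set.Ioo (0 : ℝ) 1)
    (T : ℕ) (hT : 1 ≤ T)
    (w : ℕ → ℝ) (hw : ∀ t ∈ Finset.Icc 1 T, w t = lam ^ (T - t) * (1 - lam) / (1 - lam ^ T))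
    (f : EuclideanSpace ℝ (Fin d) → EuclideanSpace ℝ (Fin d))
    (β : ℝ) (hβ : 0 < β) (hf : LipschitzWith β.toNNReal f)
    (x : ℕ → EuclideanSpace ℝ (Fin d)) (γ G : ℝ) (hγ : 0 < γ) (hG : 0 < G)
    (hx : ∀ s ∈ Finset.Icc 2 T, ‖x s - x (s - 1)‖ ≤ γ * G) :
    ‖(∑ t ∈ Finset.Icc 1 T, w t • f (x t)) - f (x T)‖ ≤
      γ * G * β * lam / ((1 - lam) * (1 - lam ^ T)) := by
  obtain ⟨hl0, hl1⟩ := hlam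
  have hlT : lam ^ T < 1 := pow_lt_one₀ hl0.le hl1 (by omega)
  have h1l : (0:ℝ) < 1 - lam := by linarith
  have h1lT : (0:ℝ) < 1 - lam ^ T := by linarith
  have hcoe : (β.toNNReal : ℝ) = β := Real.coe_toNNReal β hβ.le
  -- nonnegativity of weights
  have hw0 : ∀ t ∈ Finset.Icc 1 T, 0 ≤ w t := by
    intro t ht
    rw [hw t ht]
    positivity
  -- telescoping step bound
  have key : ∀ n m, 1 ≤ m → m + n ≤ T → ‖x (m + n) - x m‖ ≤ n * (γ * G) := by
    intro n
    induction n with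
    | zero => intro m _ _; simp
    | succ n ih =>
      intro m hm hmn
      have h1 : ‖x (m + n + 1) - x (m + n)‖ ≤ γ * G := by
        have := hx (m + n + 1) (by simp only [Finset.mem_Icc]; omega)
        simpa using this
      have h2 := ih m hm (by omega)
      calc ‖x (m + (n+1)) - x m‖
          = ‖(x (m+n+1) - x (m+n)) + (x (m+n) - x m)‖ := by
            rw [show m + (n+1) = m + n + 1 from rfl]; congr 1; abel
        _ ≤ ‖x (m+n+1) - x (m+n)‖ + ‖x (m+n) - x m‖ := norm_add_le _ _
        _ ≤ γ*G + n*(γ*G) := add_le_add h1 h2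
        _ = (n+1:ℕ)*(γ*G) := by push_cast; ring
  have hdist : ∀ t ∈ Finset.Icc 1 T, ‖x T - x t‖ ≤ (T - t : ℕ) * (γ * G) := by
    intro t ht
    simp only [Finset.mem_Icc] at ht
    have := key (T - t) t ht.1 (by omega)
    rwa [show t + (T - t) = T by omega] at this
  -- reindexing lemma
  have hreindex : ∀ g : ℕ → ℝ,
      ∑ t ∈ Finset.Icc 1 T, g (T - t) = ∑ k ∈ Finset.range T, g k := by
    intro g
    apply Finset.sum_nbij' (fun t => T - t) (fun k => T - k)
    · intro a ha; simp only [Finset.mem_Icc] at ha; simp only [Finset.mem_range]; omega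
    · intro a ha; simp only [Finset.mem_range] at ha; simp only [Finset.mem_Icc]; omega
    · intro a ha; simp only [Finset.mem_Icc] at ha; omega
    · intro a ha; simp only [Finset.mem_range] at ha; omega
    · intro a _; rfl
  -- weights sum to 1
  have hsum1 : ∑ t ∈ Finset.Icc 1 T, w t = 1 := by
    have h1 : ∑ t ∈ Finset.Icc 1 T, w t
        = ∑ t ∈ Finset.Icc 1 T, (fun k => lam ^ k * (1 - lam) / (1 - lam ^ T)) (T - t) :=
      Finset.sum_congr rfl (fun t ht => hw t ht)
    have h2 : ∑ t ∈ Finset.Icc 1 T, (fun k => lam ^ k * (1 - lam) / (1 - lam ^ T)) (T - t)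
        = ∑ k ∈ Finset.range T, lam ^ k * (1 - lam) / (1 - lam ^ T) :=
      hreindex (fun k => lam ^ k * (1 - lam) / (1 - lam ^ T))
    rw [h1, h2, ← Finset.sum_div, ← Finset.sum_mul, geom_sum_eq (by linarith)]
    have hne : lam - 1 ≠ 0 := by linarith
    rw [div_mul_eq_mul_div, div_div,
      div_eq_one_iff_eq (mul_ne_zero hne h1lT.ne')]
    ring
  -- split off f (x T)
  have hsplit : (∑ t ∈ Finset.Icc 1 T, w t • f (x t)) - f (x T)
      = ∑ t ∈ Finset.Icc 1 T, w t • (f (x t) - f (x T)) := by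
    simp only [smul_sub, Finset.sum_sub_distrib, ← Finset.sum_smul, hsum1, one_smul]
  rw [hsplit]
  have hlip : ∀ t ∈ Finset.Icc 1 T,
      ‖f (x t) - f (x T)‖ ≤ β * ((T - t : ℕ) * (γ * G)) := by
    intro t ht
    have h := hf.dist_le_mul (x t) (x T)
    rw [dist_eq_norm, dist_eq_norm, hcoe] at h
    calc ‖f (x t) - f (x T)‖ ≤ β * ‖x t - x T‖ := h
      _ = β * ‖x T - x t‖ := by rw [norm_sub_rev]
      _ ≤ β * ((T - t : ℕ) * (γ * G)) :=
          mul_le_mul_of_nonneg_left (hdist t ht) hβ.le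
  calc ‖∑ t ∈ Finset.Icc 1 T, w t • (f (x t) - f (x T))‖
      ≤ ∑ t ∈ Finset.Icc 1 T, ‖w t • (f (x t) - f (x T))‖ := norm_sum_le _ _
    _ ≤ ∑ t ∈ Finset.Icc 1 T, w t * (β * ((T - t : ℕ) * (γ * G))) := by
        apply Finset.sum_le_sum
        intro t ht
        rw [norm_smul, Real.norm_eq_abs, abs_of_nonneg (hw0 t ht)]
        exact mul_le_mul_of_nonneg_left (hlip t ht) (hw0 t ht)
    _ = (γ * G * β * ((1 - lam) / (1 - lam ^ T))) *
          ∑ t ∈ Finset.Icc 1 T, ((T - t : ℕ) : ℝ) * lam ^ (T - t) := by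
        rw [Finset.mul_sum]
        apply Finset.sum_congr rfl
        intro t ht
        rw [hw t ht]
        ring
    _ ≤ (γ * G * β * ((1 - lam) / (1 - lam ^ T))) * (lam / (1 - lam) ^ 2) := by
        apply mul_le_mul_of_nonneg_left _ (by positivity)
        have h2 : ∑ t ∈ Finset.Icc 1 T, ((T - t : ℕ) : ℝ) * lam ^ (T - t)
            = ∑ k ∈ Finset.range T, (k : ℝ) * lam ^ k :=
          hreindex (fun k => (k : ℝ) * lam ^ k)
        rw [h2]
        have htsum : HasSum (fun k : ℕ => (k : ℝ) * lam ^ k) (lam / (1 - lam) ^ 2) :=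
          hasSum_coe_mul_geometric_of_norm_lt_one
            (by rw [Real.norm_eq_abs, abs_of_pos hl0]; exact hl1)
        exact sum_le_hasSum (Finset.range T) (fun k _ => by positivity) htsum
    _ = γ * G * β * lam / ((1 - lam) * (1 - lam ^ T)) := by
        field_simp
end

section
/- Let (Ω, P) be a probability space, d ≥ 1, n ≥ 1, and let X_1, …, X_n : Ω → ℝ^d be independent random vectors with E[X_i] = 0, ‖X_i‖ ≤ μ almost surely (μ > 0), and E[‖X_i‖²] ≤ M (M > 0) for every i. Let w ∈ ℝ^n with w_i ≥ 0 for all i and Σ_{i=1}^n w_i = 1, and let V_w := Σ_{i=1}^n w_i²·E[‖X_i‖²]; assume V_w > 0. Then for every ε with 0 ≤ ε ≤ V_w/(μ·max_{1≤i≤n} w_i), P(‖Σ_{i=1}^n w_i·X_i‖ ≥ ε) ≤ exp(−ε²/(8M·Σ_{i=1}^n w_i²) + 1/4). -/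
set_option maxHeartbeats 1000000

open MeasureTheory Real


lemma sinh_le_mul_cosh {x : ℝ} (hx : 0 ≤ x) : Real.sinh x ≤ x * Real.cosh x := by
  have key : ∀ y ∈ Set.Ici (0:ℝ), Real.sinh y ≤ y * Real.cosh y → True := fun _ _ _ => trivial
  have h : MonotoneOn (fun y : ℝ => y * Real.cosh y - Real.sinh y) (Set.Ici 0) := by
    apply monotoneOn_of_deriv_nonneg (convex_Ici 0)
    · fun_prop
    · apply Differentiable.differentiableOn; fun_prop
    · intro y hy
      rw [interior_Ici] at hy
      have h1 : HasDerivAt (fun y : ℝ => y * Real.cosh y - Real.sinh y)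
          (1 * Real.cosh y + y * Real.sinh y - Real.cosh y) y := by
        exact ((hasDerivAt_id y).mul (Real.hasDerivAt_cosh y)).sub (Real.hasDerivAt_sinh y)
      rw [h1.deriv]
      have := Real.sinh_nonneg_iff.2 (le_of_lt hy)
      nlinarith [le_of_lt (Set.mem_Ioi.1 hy)]
    
  have h0 := h (Set.self_mem_Ici (a := (0:ℝ))) (Set.mem_Ici.2 hx) hx
  simp at h0
  linarith

lemma cosh_add_le_cosh_mul_exp {u v : ℝ} (hv : 0 ≤ v) :
    Real.cosh (u + v) ≤ Real.cosh u * Real.exp v := by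
  rw [Real.cosh_add]
  have h1 : Real.sinh u ≤ Real.cosh u := by
    nlinarith [Real.sinh_add_cosh u, Real.exp_pos (-u), Real.sinh_eq u, Real.cosh_eq u]
  have h2 : 0 ≤ Real.sinh v := Real.sinh_nonneg_iff.2 hv
  have h3 : Real.cosh v + Real.sinh v = Real.exp v := by rw [add_comm]; exact Real.sinh_add_cosh v
  nlinarith [Real.cosh_pos u]

lemma taylor_core (l η c0 c1 c2 : ℝ) (hl : 0 ≤ l) (hη : 0 < η)
    (hc0 : 0 ≤ c0) (hc2 : 0 ≤ c2) (hdisc : c1^2 ≤ 4*c0*c2) :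
    Real.cosh (l * Real.sqrt (c0 + c1 + c2 + η)) ≤
      Real.cosh (l * Real.sqrt (c0 + η))
      + Real.sinh (l * Real.sqrt (c0 + η)) * (l * (c1 / (2 * Real.sqrt (c0 + η))))
      + l^2 * c2 * Real.cosh (l * (Real.sqrt c0 + Real.sqrt c2 + Real.sqrt η)) / 2 := by
  set s : ℝ → ℝ := fun t => c0 + η + c1*t + c2*t^2 with hs_def
  have hq : ∀ t : ℝ, 0 ≤ c0 + c1*t + c2*t^2 := by
    intro t
    rcases eq_or_lt_of_le hc2 with h | h
    · have hc1 : c1 = 0 := by nlinarith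
      simpa [hc1, ← h] using hc0
    · nlinarith [sq_nonneg (c1 + 2*c2*t)]
  have hs_pos : ∀ t, 0 < s t := by
    intro t; have := hq t; simp only [hs_def]; nlinarith
  set r : ℝ → ℝ := fun t => Real.sqrt (s t) with hr_def
  have hr_pos : ∀ t, 0 < r t := fun t => Real.sqrt_pos.2 (hs_pos t)
  have hr_sq : ∀ t, (r t)^2 = s t := fun t => Real.sq_sqrt (hs_pos t).le
  have hds : ∀ t, HasDerivAt s (c1 + 2*c2*t) t := by
    intro t
    have : HasDerivAt (fun t : ℝ => c0 + η + c1*t + c2*t^2)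
        (0 + c1*1 + c2*(2*t^1)) t :=
      (((hasDerivAt_const t (c0+η)).add ((hasDerivAt_id t).const_mul c1)).add
        ((hasDerivAt_pow 2 t).const_mul c2))
    convert this using 1 <;> ring_nf
  have hdr : ∀ t, HasDerivAt r ((c1 + 2*c2*t) / (2 * r t)) t := by
    intro t
    exact (hds t).sqrt (hs_pos t).ne'
  set G1 : ℝ → ℝ := fun t => Real.sinh (l * r t) * (l * ((c1 + 2*c2*t) / (2 * r t)))
    with hG1_def
  set g : ℝ → ℝ := fun t => Real.cosh (l * r t) with hg_def
  have hdg : ∀ t, HasDerivAt g (G1 t) t := by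
    intro t
    simpa [hG1_def, mul_comm, mul_assoc, mul_left_comm] using ((hdr t).const_mul l).cosh
  set G2 : ℝ → ℝ := fun t =>
    (Real.cosh (l * r t) * (l * ((c1 + 2*c2*t) / (2 * r t)))) * (l * ((c1 + 2*c2*t) / (2 * r t)))
    + Real.sinh (l * r t) *
      (l * (((2*c2) * (2 * r t) - (c1 + 2*c2*t) * (2 * ((c1 + 2*c2*t) / (2 * r t)))) / (2 * r t)^2))
    with hG2_def
  have hdG1 : ∀ t, HasDerivAt G1 (G2 t) t := by
    intro t
    have h2r : HasDerivAt (fun t => 2 * r t) (2 * ((c1 + 2*c2*t) / (2 * r t))) t :=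
      (hdr t).const_mul 2
    have hnum : HasDerivAt (fun t : ℝ => c1 + 2*c2*t) (2*c2) t := by
      exact ((hasDerivAt_const t c1).add ((hasDerivAt_id' t).const_mul (2*c2))).congr_deriv (by ring)
    have hv : HasDerivAt (fun t => l * ((c1 + 2*c2*t) / (2 * r t)))
        (l * (((2*c2) * (2 * r t) - (c1 + 2*c2*t) * (2 * ((c1 + 2*c2*t) / (2 * r t)))) / (2 * r t)^2)) t :=
      (hnum.div h2r (mul_pos two_pos (hr_pos t)).ne').const_mul l
    have hu : HasDerivAt (fun t => Real.sinh (l * r t))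
        (Real.cosh (l * r t) * (l * ((c1 + 2*c2*t) / (2 * r t)))) t := by
      simpa [mul_comm, mul_assoc, mul_left_comm] using ((hdr t).const_mul l).sinh
    exact hu.mul hv
  set K : ℝ := Real.cosh (l * (Real.sqrt c0 + Real.sqrt c2 + Real.sqrt η)) with hK_def
  set B : ℝ := l^2 * c2 * K with hB_def
  have hK1 : (1:ℝ) ≤ K := Real.one_le_cosh _
  have hcosh_bound : ∀ t ∈ Set.Icc (0:ℝ) 1, Real.cosh (l * r t) ≤ K := by
    intro t ht
    have hc1abs : c1 ≤ 2 * Real.sqrt c0 * Real.sqrt c2 := by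
      calc c1 ≤ |c1| := le_abs_self c1
      _ = Real.sqrt (c1^2) := (Real.sqrt_sq_eq_abs c1).symm
      _ ≤ Real.sqrt ((2 * Real.sqrt c0 * Real.sqrt c2)^2) := by
          apply Real.sqrt_le_sqrt
          have h0 := Real.sq_sqrt hc0; have h2 := Real.sq_sqrt hc2
          nlinarith
      _ = |2 * Real.sqrt c0 * Real.sqrt c2| := Real.sqrt_sq_eq_abs _
      _ = 2 * Real.sqrt c0 * Real.sqrt c2 := by
          rw [abs_of_nonneg]; positivity
    have hst : s t ≤ (Real.sqrt c0 + Real.sqrt c2 + Real.sqrt η)^2 := by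
      have h0 := Real.sq_sqrt hc0
      have h2 := Real.sq_sqrt hc2
      have hη2 := Real.sq_sqrt hη.le
      have ht0 := ht.1
      have ht1 := ht.2
      have hc1t : c1 * t ≤ 2 * Real.sqrt c0 * Real.sqrt c2 := by
        rcases le_or_gt 0 c1 with h | h
        · calc c1 * t ≤ c1 * 1 := by nlinarith
            _ = c1 := mul_one c1
            _ ≤ _ := hc1abs
        · calc c1 * t ≤ 0 := by nlinarith
            _ ≤ _ := by positivity
      have hc2t : c2 * t^2 ≤ c2 := by
        nlinarith [mul_nonneg (mul_nonneg hc2 (by linarith : (0:ℝ) ≤ 1 - t)) (by linarith : (0:ℝ) ≤ 1 + t)]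
      simp only [hs_def]
      nlinarith [mul_nonneg (Real.sqrt_nonneg c0) (Real.sqrt_nonneg η),
        mul_nonneg (Real.sqrt_nonneg c2) (Real.sqrt_nonneg η)]
    have hrle : r t ≤ Real.sqrt c0 + Real.sqrt c2 + Real.sqrt η := by
      calc r t ≤ Real.sqrt ((Real.sqrt c0 + Real.sqrt c2 + Real.sqrt η)^2) :=
        Real.sqrt_le_sqrt hst
      _ = _ := by rw [Real.sqrt_sq (by positivity)]
    rw [hK_def, Real.cosh_le_cosh, abs_of_nonneg (by positivity),
      abs_of_nonneg (by positivity)]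
    exact mul_le_mul_of_nonneg_left hrle hl
  have hG2_le : ∀ t ∈ Set.Icc (0:ℝ) 1, G2 t ≤ B := by
    intro t ht
    have hRpos : 0 < r t := hr_pos t
    have hSpos : 0 < s t := hs_pos t
    have hRS : (r t)^2 = s t := hr_sq t
    have hD2 : (c1 + 2*c2*t)^2 ≤ 4*c2*(s t) := by
      simp only [hs_def]; nlinarith [mul_nonneg hc2 hη.le]
    have hsinh : Real.sinh (l * r t) ≤ (l * r t) * Real.cosh (l * r t) :=
      sinh_le_mul_cosh (mul_nonneg hl hRpos.le)
    have hcosh_le := hcosh_bound t ht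
    have hcosh_pos : (0:ℝ) < Real.cosh (l * r t) := Real.cosh_pos _
    have hnum_nonneg : 0 ≤ 4*c2*(s t) - (c1 + 2*c2*t)^2 := by linarith
    simp only [hG2_def, hB_def]
    have key1 : (Real.cosh (l * r t) * (l * ((c1 + 2*c2*t) / (2 * r t)))) *
        (l * ((c1 + 2*c2*t) / (2 * r t)))
        = l^2 * Real.cosh (l * r t) * ((c1 + 2*c2*t)^2 / (4 * (s t))) := by
      rw [← hRS]; field_simp; ring
    have key2 : (l * (((2*c2) * (2 * r t) - (c1 + 2*c2*t) * (2 * ((c1 + 2*c2*t) / (2 * r t)))) / (2 * r t)^2))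
        = l * ((4*c2*(s t) - (c1 + 2*c2*t)^2) / (4 * (s t) * r t)) := by
      rw [← hRS]; field_simp; ring
    rw [key1, key2]
    have step : Real.sinh (l * r t) * (l * ((4*c2*(s t) - (c1 + 2*c2*t)^2) / (4 * (s t) * r t)))
        ≤ ((l * r t) * Real.cosh (l * r t)) * (l * ((4*c2*(s t) - (c1 + 2*c2*t)^2) / (4 * (s t) * r t))) := by
      apply mul_le_mul_of_nonneg_right hsinh
      have h4 : (0:ℝ) ≤ (4*c2*(s t) - (c1 + 2*c2*t)^2) / (4 * (s t) * r t) :=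
        div_nonneg hnum_nonneg (by nlinarith)
      exact mul_nonneg hl h4
    have step2 : ((l * r t) * Real.cosh (l * r t)) * (l * ((4*c2*(s t) - (c1 + 2*c2*t)^2) / (4 * (s t) * r t)))
        = l^2 * Real.cosh (l * r t) * ((4*c2*(s t) - (c1 + 2*c2*t)^2) / (4 * (s t))) := by
      field_simp
    have step3 : l^2 * Real.cosh (l * r t) * ((c1 + 2*c2*t)^2 / (4 * (s t)))
        + l^2 * Real.cosh (l * r t) * ((4*c2*(s t) - (c1 + 2*c2*t)^2) / (4 * (s t)))
        = l^2 * c2 * Real.cosh (l * r t) := by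
      field_simp; ring
    calc l^2 * Real.cosh (l * r t) * ((c1 + 2*c2*t)^2 / (4 * (s t)))
        + Real.sinh (l * r t) * (l * ((4*c2*(s t) - (c1 + 2*c2*t)^2) / (4 * (s t) * r t)))
        ≤ l^2 * Real.cosh (l * r t) * ((c1 + 2*c2*t)^2 / (4 * (s t)))
          + l^2 * Real.cosh (l * r t) * ((4*c2*(s t) - (c1 + 2*c2*t)^2) / (4 * (s t))) := by
          rw [← step2]; linarith [step]
      _ = l^2 * c2 * Real.cosh (l * r t) := step3
      _ ≤ l^2 * c2 * K :=
          mul_le_mul_of_nonneg_left hcosh_le (mul_nonneg (sq_nonneg l) hc2)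
  -- Taylor estimate
  have hG1_growth : ∀ t ∈ Set.Icc (0:ℝ) 1, G1 t ≤ G1 0 + B * t := by
    have hanti : AntitoneOn (fun t => G1 t - B * t) (Set.Icc (0:ℝ) 1) := by
      apply antitoneOn_of_deriv_nonpos (convex_Icc 0 1)
      · have : Continuous (fun t => G1 t - B * t) := by
          apply Continuous.sub ?_ (by fun_prop)
          exact continuous_iff_continuousAt.2 fun t => (hdG1 t).continuousAt
        exact this.continuousOn
      · intro x _
        exact ((hdG1 x).sub ((hasDerivAt_id x).const_mul B)).differentiableAt.differentiableWithinAt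
      · intro x hx
        rw [interior_Icc] at hx
        have hd : HasDerivAt (fun t => G1 t - B * t) (G2 x - B * 1) x :=
          (hdG1 x).sub ((hasDerivAt_id x).const_mul B)
        rw [hd.deriv]
        have := hG2_le x ⟨hx.1.le, hx.2.le⟩
        linarith
    intro t ht
    have := hanti (Set.left_mem_Icc.2 zero_le_one) ht ht.1
    simp only [mul_zero, sub_zero] at this
    linarith
  have hfinal : g 1 ≤ g 0 + G1 0 + B / 2 := by
    have hanti : AntitoneOn (fun t => g t - G1 0 * t - B * t^2 / 2) (Set.Icc (0:ℝ) 1) := by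
      apply antitoneOn_of_deriv_nonpos (convex_Icc 0 1)
      · have : Continuous (fun t => g t - G1 0 * t - B * t^2 / 2) := by
          apply Continuous.sub (Continuous.sub ?_ (by fun_prop)) (by fun_prop)
          exact continuous_iff_continuousAt.2 fun t => (hdg t).continuousAt
        exact this.continuousOn
      · intro x _
        have hd : HasDerivAt (fun t => g t - G1 0 * t - B * t^2 / 2)
            (G1 x - G1 0 * 1 - B * (2*x^1) / 2) x :=
          ((hdg x).sub ((hasDerivAt_id x).const_mul (G1 0))).sub
            (((hasDerivAt_pow 2 x).const_mul B).div_const 2)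
        exact hd.differentiableAt.differentiableWithinAt
      · intro x hx
        rw [interior_Icc] at hx
        have hd : HasDerivAt (fun t => g t - G1 0 * t - B * t^2 / 2)
            (G1 x - G1 0 * 1 - B * (2*x^1) / 2) x :=
          ((hdg x).sub ((hasDerivAt_id x).const_mul (G1 0))).sub
            (((hasDerivAt_pow 2 x).const_mul B).div_const 2)
        rw [hd.deriv]
        have := hG1_growth x ⟨hx.1.le, hx.2.le⟩
        have hx0 : 0 ≤ x := hx.1.le
        simp only [pow_one]
        nlinarith
    have := hanti (Set.left_mem_Icc.2 zero_le_one) (Set.right_mem_Icc.2 zero_le_one) zero_le_one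
    simp only [mul_zero, mul_one, sub_zero, one_pow, zero_pow] at this
    nlinarith
  -- translate back
  have hs1 : s 1 = c0 + c1 + c2 + η := by simp only [hs_def]; ring
  have hs0 : s 0 = c0 + η := by simp only [hs_def]; ring
  have hg1 : g 1 = Real.cosh (l * Real.sqrt (c0 + c1 + c2 + η)) := by
    simp only [hg_def, hr_def, hs1]
  have hg0 : g 0 = Real.cosh (l * Real.sqrt (c0 + η)) := by
    simp only [hg_def, hr_def, hs0]
  have hG10 : G1 0 = Real.sinh (l * Real.sqrt (c0 + η)) * (l * (c1 / (2 * Real.sqrt (c0 + η)))) := by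
    simp only [hG1_def, hr_def, hs0]
    norm_num
  calc Real.cosh (l * Real.sqrt (c0 + c1 + c2 + η)) = g 1 := hg1.symm
    _ ≤ g 0 + G1 0 + B / 2 := hfinal
    _ = _ := by rw [hg0, hG10, hB_def]

section Vec
variable {E : Type*} [NormedAddCommGroup E] [InnerProductSpace ℝ E]

local notation "⟪" x ", " y "⟫" => @inner ℝ _ _ x y

lemma pointwise_vec {l η : ℝ} (hl : 0 ≤ l) (hη : 0 < η) (x y : E) :
    Real.cosh (l * ‖x + y‖) ≤
      Real.cosh (l * Real.sqrt (‖x‖^2 + η))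
      + (Real.sinh (l * Real.sqrt (‖x‖^2 + η)) * (l / Real.sqrt (‖x‖^2 + η))) * ⟪x, y⟫
      + (l^2 * Real.cosh (l * (‖x‖ + ‖y‖ + Real.sqrt η)) / 2) * ‖y‖^2 := by
  have hCS : (2*⟪x, y⟫)^2 ≤ 4*‖x‖^2*‖y‖^2 := by
    have h := abs_real_inner_le_norm x y
    have h2 : ⟪x, y⟫^2 ≤ (‖x‖*‖y‖)^2 := by
      have := abs_nonneg ⟪x, y⟫
      nlinarith [sq_abs ⟪x, y⟫]
    nlinarith
  have key := taylor_core l η (‖x‖^2) (2*⟪x, y⟫) (‖y‖^2) hl hη (sq_nonneg _) (sq_nonneg _) hCS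
  have hx2 : Real.sqrt (‖x‖^2) = ‖x‖ := Real.sqrt_sq (norm_nonneg x)
  have hy2 : Real.sqrt (‖y‖^2) = ‖y‖ := Real.sqrt_sq (norm_nonneg y)
  rw [hx2, hy2] at key
  have hns : ‖x‖^2 + 2*⟪x, y⟫ + ‖y‖^2 = ‖x + y‖^2 := (norm_add_sq_real x y).symm
  have hS : (0:ℝ) < Real.sqrt (‖x‖^2 + η) := Real.sqrt_pos.2 (by positivity)
  have lhs_le : Real.cosh (l * ‖x + y‖) ≤
      Real.cosh (l * Real.sqrt (‖x‖^2 + 2*⟪x, y⟫ + ‖y‖^2 + η)) := by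
    rw [Real.cosh_le_cosh, abs_of_nonneg (by positivity), abs_of_nonneg (by positivity)]
    apply mul_le_mul_of_nonneg_left _ hl
    calc ‖x + y‖ = Real.sqrt (‖x + y‖^2) := (Real.sqrt_sq (norm_nonneg _)).symm
      _ ≤ Real.sqrt (‖x + y‖^2 + η) := Real.sqrt_le_sqrt (by linarith)
      _ = _ := by rw [hns]
  refine lhs_le.trans (key.trans (le_of_eq ?_))
  have h2 : Real.sinh (l * Real.sqrt (‖x‖^2 + η)) * (l * (2*⟪x, y⟫ / (2 * Real.sqrt (‖x‖^2 + η))))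
      = (Real.sinh (l * Real.sqrt (‖x‖^2 + η)) * (l / Real.sqrt (‖x‖^2 + η))) * ⟪x, y⟫ := by
    field_simp
  rw [h2]
  ring

end Vec

section IntStep
variable {E : Type*} [NormedAddCommGroup E] [InnerProductSpace ℝ E]
  [MeasurableSpace E] [BorelSpace E] [SecondCountableTopology E] [CompleteSpace E]

local notation "⟪" x ", " y "⟫" => @inner ℝ _ _ x y

lemma integral_step (ν : Measure E) [IsProbabilityMeasure ν] {l c v : ℝ}
    (hl : 0 ≤ l) (hc : 0 ≤ c)
    (hbdd : ∀ᵐ y ∂ν, ‖y‖ ≤ c) (hmean : (∫ y, y ∂ν) = 0) (hvar : (∫ y, ‖y‖^2 ∂ν) ≤ v)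
    (x : E) :
    (∫ y, Real.cosh (l * ‖x + y‖) ∂ν) ≤
      Real.cosh (l * ‖x‖) * (1 + l^2 * v / 2 * Real.exp (l * c)) := by
  have hv0 : 0 ≤ v := le_trans (integral_nonneg (fun y => sq_nonneg ‖y‖)) hvar
  -- integrability facts
  have hcont : Continuous (fun y : E => Real.cosh (l * ‖x + y‖)) := by fun_prop
  have hLHSint : Integrable (fun y => Real.cosh (l * ‖x + y‖)) ν := by
    apply Integrable.mono' (integrable_const (Real.cosh (l * (‖x‖ + c))))
      hcont.aestronglyMeasurable
    filter_upwards [hbdd] with y hy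
    rw [Real.norm_eq_abs, abs_of_pos (Real.cosh_pos _), Real.cosh_le_cosh,
      abs_of_nonneg (by positivity), abs_of_nonneg (by positivity)]
    apply mul_le_mul_of_nonneg_left _ hl
    calc ‖x + y‖ ≤ ‖x‖ + ‖y‖ := norm_add_le x y
      _ ≤ ‖x‖ + c := by linarith
  have hid : Integrable (fun y : E => y) ν := by
    apply Integrable.mono' (integrable_const c) measurable_id'.aestronglyMeasurable
    simpa using hbdd
  have hinner : Integrable (fun y : E => ⟪x, y⟫) ν := hid.const_inner x
  have hnsq : Integrable (fun y : E => ‖y‖^2) ν := by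
    apply Integrable.mono' (integrable_const (c^2)) ((continuous_norm.pow 2).aestronglyMeasurable)
    filter_upwards [hbdd] with y hy
    rw [Real.norm_eq_abs, abs_of_nonneg (sq_nonneg _)]
    exact pow_le_pow_left₀ (norm_nonneg y) hy 2
  -- the bound for each positive η
  have key : ∀ η : ℝ, 0 < η →
      (∫ y, Real.cosh (l * ‖x + y‖) ∂ν) ≤
        Real.cosh (l * Real.sqrt (‖x‖^2 + η)) *
          (1 + l^2 * v / 2 * Real.exp (l * (c + Real.sqrt η))) := by
    intro η hη
    set A : ℝ := Real.cosh (l * Real.sqrt (‖x‖^2 + η)) with hA_def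
    set co : ℝ := Real.sinh (l * Real.sqrt (‖x‖^2 + η)) * (l / Real.sqrt (‖x‖^2 + η))
      with hco_def
    set C : ℝ := l^2 * A * Real.exp (l * (c + Real.sqrt η)) / 2 with hC_def
    have hA1 : (1:ℝ) ≤ A := Real.one_le_cosh _
    have hC0 : 0 ≤ C := by
      rw [hC_def]
      have : (0:ℝ) < A := lt_of_lt_of_le one_pos hA1
      positivity
    have hae : ∀ᵐ y ∂ν, Real.cosh (l * ‖x + y‖) ≤ A + co * ⟪x, y⟫ + C * ‖y‖^2 := by
      filter_upwards [hbdd] with y hy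
      refine (pointwise_vec hl hη x y).trans ?_
      have hmono : Real.cosh (l * (‖x‖ + ‖y‖ + Real.sqrt η)) ≤ A * Real.exp (l * (c + Real.sqrt η)) := by
        have h1 : Real.cosh (l * (‖x‖ + ‖y‖ + Real.sqrt η)) =
            Real.cosh (l * ‖x‖ + l * (‖y‖ + Real.sqrt η)) := by ring_nf
        rw [h1]
        calc Real.cosh (l * ‖x‖ + l * (‖y‖ + Real.sqrt η))
            ≤ Real.cosh (l * ‖x‖) * Real.exp (l * (‖y‖ + Real.sqrt η)) :=
              cosh_add_le_cosh_mul_exp (by positivity)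
          _ ≤ A * Real.exp (l * (c + Real.sqrt η)) := by
              apply mul_le_mul
              · rw [hA_def, Real.cosh_le_cosh, abs_of_nonneg (by positivity),
                  abs_of_nonneg (by positivity)]
                apply mul_le_mul_of_nonneg_left _ hl
                calc ‖x‖ = Real.sqrt (‖x‖^2) := (Real.sqrt_sq (norm_nonneg _)).symm
                  _ ≤ _ := Real.sqrt_le_sqrt (by linarith)
              · apply Real.exp_le_exp.2
                apply mul_le_mul_of_nonneg_left _ hl
                linarith
              · positivity
              · exact le_trans zero_le_one hA1
      have h3 : (l^2 * Real.cosh (l * (‖x‖ + ‖y‖ + Real.sqrt η)) / 2) * ‖y‖^2 ≤ C * ‖y‖^2 := by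
        apply mul_le_mul_of_nonneg_right _ (sq_nonneg _)
        rw [hC_def]
        nlinarith [sq_nonneg l]
      simp only [hA_def, hco_def, hC_def] at h3 ⊢
      linarith
    have hRHSint : Integrable (fun y => A + co * ⟪x, y⟫ + C * ‖y‖^2) ν :=
      ((integrable_const A).add (hinner.const_mul co)).add (hnsq.const_mul C)
    have hint1 : Integrable (fun y => A + co * ⟪x, y⟫) ν := by
      exact (integrable_const A).add (hinner.const_mul co)
    calc (∫ y, Real.cosh (l * ‖x + y‖) ∂ν) ≤ ∫ y, (A + co * ⟪x, y⟫ + C * ‖y‖^2) ∂ν :=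
        integral_mono_ae hLHSint hRHSint hae
      _ = A + co * (∫ y, ⟪x, y⟫ ∂ν) + C * (∫ y, ‖y‖^2 ∂ν) := by
          rw [integral_add hint1 (hnsq.const_mul C),
            integral_add (integrable_const A) (hinner.const_mul co),
            integral_const, integral_const_mul, integral_const_mul]
          simp [measure_univ]
      _ = A + co * 0 + C * (∫ y, ‖y‖^2 ∂ν) := by
          rw [integral_inner hid x, hmean, inner_zero_right]
      _ ≤ A + 0 + C * v := by
          rw [mul_zero]
          have := mul_le_mul_of_nonneg_left hvar hC0
          linarith
      _ = A * (1 + l^2 * v / 2 * Real.exp (l * (c + Real.sqrt η))) := by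
          rw [hC_def]; ring
  -- take the limit η → 0⁺
  have htend : Filter.Tendsto
      (fun η : ℝ => Real.cosh (l * Real.sqrt (‖x‖^2 + η)) *
        (1 + l^2 * v / 2 * Real.exp (l * (c + Real.sqrt η))))
      (nhdsWithin 0 (Set.Ioi 0))
      (nhds (Real.cosh (l * ‖x‖) * (1 + l^2 * v / 2 * Real.exp (l * c)))) := by
    have hcont2 : Continuous (fun η : ℝ => Real.cosh (l * Real.sqrt (‖x‖^2 + η)) *
        (1 + l^2 * v / 2 * Real.exp (l * (c + Real.sqrt η)))) := by fun_prop
    have h0 : Real.cosh (l * Real.sqrt (‖x‖^2 + 0)) *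
        (1 + l^2 * v / 2 * Real.exp (l * (c + Real.sqrt 0)))
        = Real.cosh (l * ‖x‖) * (1 + l^2 * v / 2 * Real.exp (l * c)) := by
      rw [add_zero, Real.sqrt_zero, add_zero, Real.sqrt_sq (norm_nonneg x)]
    have := hcont2.continuousAt (x := (0:ℝ))
    rw [ContinuousAt, h0] at this
    exact this.mono_left nhdsWithin_le_nhds
  exact ge_of_tendsto htend (eventually_mem_nhdsWithin.mono fun η hη => key η hη)

end IntStep

section Indep
variable {E : Type*} [NormedAddCommGroup E] [InnerProductSpace ℝ E]
  [MeasurableSpace E] [BorelSpace E] [SecondCountableTopology E] [CompleteSpace E]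
  {Ω : Type*} [MeasureSpace Ω] [IsProbabilityMeasure (volume : Measure Ω)]

local notation "⟪" x ", " y "⟫" => @inner ℝ _ _ x y

open ProbabilityTheory

lemma fubini_indep (U W : Ω → E) (hU : Measurable U) (hW : Measurable W)
    (hUW : IndepFun U W volume) (f : E → E → ℝ) (hf : Continuous (Function.uncurry f))
    {bU c : ℝ} (hUb : ∀ᵐ ω ∂(volume : Measure Ω), ‖U ω‖ ≤ bU)
    (hWb : ∀ᵐ ω ∂(volume : Measure Ω), ‖W ω‖ ≤ c)
    (K : ℝ) (hK : ∀ u w : E, ‖u‖ ≤ bU → ‖w‖ ≤ c → |f u w| ≤ K) :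
    (∫ ω, f (U ω) (W ω)) =
      ∫ u, (∫ w, f u w ∂(volume.map W)) ∂(volume.map U) ∧
    Integrable (Function.uncurry f) ((volume.map U).prod (volume.map W)) := by
  have hmapU : IsProbabilityMeasure (volume.map U) := Measure.isProbabilityMeasure_map hU.aemeasurable
  have hmapW : IsProbabilityMeasure (volume.map W) := Measure.isProbabilityMeasure_map hW.aemeasurable
  have hprod : volume.map (fun ω => (U ω, W ω)) = (volume.map U).prod (volume.map W) :=
    (ProbabilityTheory.indepFun_iff_map_prod_eq_prod_map_map hU.aemeasurable
      hW.aemeasurable).1 hUW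
  have hUb' : ∀ᵐ u ∂(volume.map U), ‖u‖ ≤ bU := by
    rw [MeasureTheory.ae_map_iff hU.aemeasurable]
    · exact hUb
    · exact measurableSet_le (by fun_prop) measurable_const
  have hWb' : ∀ᵐ w ∂(volume.map W), ‖w‖ ≤ c := by
    rw [MeasureTheory.ae_map_iff hW.aemeasurable]
    · exact hWb
    · exact measurableSet_le (by fun_prop) measurable_const
  have hmeasset : MeasurableSet {p : E × E | ‖p.1‖ ≤ bU ∧ ‖p.2‖ ≤ c} := by
    have h1 : {p : E × E | ‖p.1‖ ≤ bU ∧ ‖p.2‖ ≤ c}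
        = {p : E × E | ‖p.1‖ ≤ bU} ∩ {p : E × E | ‖p.2‖ ≤ c} := rfl
    rw [h1]
    exact (measurableSet_le measurable_fst.norm measurable_const).inter
      (measurableSet_le measurable_snd.norm measurable_const)
  have haeprod : ∀ᵐ p ∂((volume.map U).prod (volume.map W)),
      ‖p.1‖ ≤ bU ∧ ‖p.2‖ ≤ c := by
    have := (MeasureTheory.Measure.ae_prod_mem_iff_ae_ae_mem
      (μ := volume.map U) (ν := volume.map W) hmeasset).2 ?_
    · exact this
    · filter_upwards [hUb'] with u hu
      filter_upwards [hWb'] with w hw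
      exact ⟨hu, hw⟩
  have hint : Integrable (Function.uncurry f) ((volume.map U).prod (volume.map W)) := by
    apply Integrable.mono' (integrable_const K) hf.aestronglyMeasurable
    filter_upwards [haeprod] with p hp
    rw [Real.norm_eq_abs]
    exact hK p.1 p.2 hp.1 hp.2
  constructor
  · have h1 : (∫ ω, f (U ω) (W ω)) = ∫ p : E × E, f p.1 p.2 ∂(volume.map (fun ω => (U ω, W ω))) := by
      rw [integral_map (hU.prodMk hW).aemeasurable]
      exact hf.aestronglyMeasurable
    rw [h1, hprod]
    exact integral_prod _ hint
  · exact hint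

lemma indep_inner_eq_zero (U W : Ω → E) (hU : Measurable U) (hW : Measurable W)
    (hUW : IndepFun U W volume) {bU c : ℝ}
    (hUb : ∀ᵐ ω ∂(volume : Measure Ω), ‖U ω‖ ≤ bU) (hc : 0 ≤ c)
    (hWb : ∀ᵐ ω ∂(volume : Measure Ω), ‖W ω‖ ≤ c)
    (hWmean : (∫ ω, W ω) = 0) :
    (∫ ω, ⟪U ω, W ω⟫) = 0 := by
  have hbU0 : 0 ≤ bU := by
    by_contra h
    push_neg at h
    have : ∀ᵐ ω ∂(volume : Measure Ω), False := by
      filter_upwards [hUb] with ω hω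
      exact absurd (le_trans (norm_nonneg _) hω) (by linarith)
    have h0 : (volume : Measure Ω) = 0 := by simpa using this
    have h1 := measure_univ (μ := (volume : Measure Ω))
    rw [h0] at h1
    simp at h1
  obtain ⟨heq, hint⟩ := fubini_indep U W hU hW hUW (fun u w => ⟪u, w⟫)
    (by exact continuous_inner) hUb hWb (bU * c)
    (fun u w hu hw => le_trans (abs_real_inner_le_norm u w)
      (mul_le_mul hu hw (norm_nonneg w) hbU0))
  rw [heq]
  have hWid : Integrable (fun w : E => w) (volume.map W) := by
    apply Integrable.mono' (integrable_const c) measurable_id'.aestronglyMeasurable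
    rw [MeasureTheory.ae_map_iff hW.aemeasurable]
    · exact hWb
    · exact measurableSet_le (by fun_prop) measurable_const
  have hWmean' : (∫ w, w ∂(volume.map W)) = 0 := by
    rw [integral_map hW.aemeasurable measurable_id'.aestronglyMeasurable]
    exact hWmean
  have : ∀ u : E, (∫ w, ⟪u, w⟫ ∂(volume.map W)) = 0 := by
    intro u
    rw [integral_inner hWid u, hWmean', inner_zero_right]
  simp only [this, integral_zero]

lemma step_indep (U W : Ω → E) (hU : Measurable U) (hW : Measurable W)
    (hUW : IndepFun U W volume) {l bU c v : ℝ} (hl : 0 ≤ l) (hc : 0 ≤ c)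
    (hUb : ∀ᵐ ω ∂(volume : Measure Ω), ‖U ω‖ ≤ bU)
    (hWb : ∀ᵐ ω ∂(volume : Measure Ω), ‖W ω‖ ≤ c)
    (hWmean : (∫ ω, W ω) = 0) (hWvar : (∫ ω, ‖W ω‖^2) ≤ v) :
    (∫ ω, Real.cosh (l * ‖U ω + W ω‖)) ≤
      (∫ ω, Real.cosh (l * ‖U ω‖)) * (1 + l^2 * v / 2 * Real.exp (l * c)) := by
  have hbU0 : 0 ≤ bU := by
    by_contra h
    push_neg at h
    have : ∀ᵐ ω ∂(volume : Measure Ω), False := by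
      filter_upwards [hUb] with ω hω
      exact absurd (le_trans (norm_nonneg _) hω) (by linarith)
    have h0 : (volume : Measure Ω) = 0 := by simpa using this
    have h1 := measure_univ (μ := (volume : Measure Ω))
    rw [h0] at h1
    simp at h1
  have hv0 : 0 ≤ v := by
    refine le_trans (integral_nonneg fun ω => sq_nonneg _) hWvar
  have hmapW : IsProbabilityMeasure (volume.map W) := Measure.isProbabilityMeasure_map hW.aemeasurable
  have hmapU : IsProbabilityMeasure (volume.map U) := Measure.isProbabilityMeasure_map hU.aemeasurable
  obtain ⟨heq, hint⟩ := fubini_indep U W hU hW hUW (fun u w => Real.cosh (l * ‖u + w‖))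
    (by fun_prop) hUb hWb (Real.cosh (l * (bU + c)))
    (fun u w hu hw => by
      rw [abs_of_pos (Real.cosh_pos _), Real.cosh_le_cosh, abs_of_nonneg (by positivity),
        abs_of_nonneg (by positivity)]
      apply mul_le_mul_of_nonneg_left _ hl
      calc ‖u + w‖ ≤ ‖u‖ + ‖w‖ := norm_add_le u w
        _ ≤ bU + c := add_le_add hu hw)
  rw [heq]
  -- facts about map W
  have hWb' : ∀ᵐ w ∂(volume.map W), ‖w‖ ≤ c := by
    rw [MeasureTheory.ae_map_iff hW.aemeasurable]
    · exact hWb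
    · exact measurableSet_le (by fun_prop) measurable_const
  have hWmean' : (∫ w, w ∂(volume.map W)) = 0 := by
    rw [integral_map hW.aemeasurable measurable_id'.aestronglyMeasurable]
    exact hWmean
  have hWvar' : (∫ w, ‖w‖^2 ∂(volume.map W)) ≤ v := by
    rw [integral_map hW.aemeasurable ((by fun_prop : Continuous fun w : E => ‖w‖^2).aestronglyMeasurable)]
    exact hWvar
  have hinner : ∀ u : E, (∫ w, Real.cosh (l * ‖u + w‖) ∂(volume.map W)) ≤
      Real.cosh (l * ‖u‖) * (1 + l^2 * v / 2 * Real.exp (l * c)) := fun u =>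
    integral_step (volume.map W) hl hc hWb' hWmean' hWvar' u
  have hK0 : (0:ℝ) ≤ 1 + l^2 * v / 2 * Real.exp (l * c) := by positivity
  calc (∫ u, (∫ w, Real.cosh (l * ‖u + w‖) ∂(volume.map W)) ∂(volume.map U))
      ≤ ∫ u, Real.cosh (l * ‖u‖) * (1 + l^2 * v / 2 * Real.exp (l * c)) ∂(volume.map U) := by
        apply integral_mono hint.integral_prod_left
        · apply Integrable.mul_const
          apply Integrable.mono' (integrable_const (Real.cosh (l * bU)))
            (by fun_prop : Continuous fun u : E => Real.cosh (l * ‖u‖)).aestronglyMeasurable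
          rw [MeasureTheory.ae_map_iff hU.aemeasurable]
          · filter_upwards [hUb] with ω hω
            rw [Real.norm_eq_abs, abs_of_pos (Real.cosh_pos _), Real.cosh_le_cosh,
              abs_of_nonneg (by positivity), abs_of_nonneg (by positivity)]
            exact mul_le_mul_of_nonneg_left hω hl
          · exact measurableSet_le (by fun_prop) measurable_const
        · exact hinner
      _ = (∫ u, Real.cosh (l * ‖u‖) ∂(volume.map U)) * (1 + l^2 * v / 2 * Real.exp (l * c)) :=
        integral_mul_const _ _
      _ = (∫ ω, Real.cosh (l * ‖U ω‖)) * (1 + l^2 * v / 2 * Real.exp (l * c)) := by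
        rw [integral_map hU.aemeasurable
          ((by fun_prop : Continuous fun u : E => Real.cosh (l * ‖u‖)).aestronglyMeasurable)]

end Indep

section Induct
variable {E : Type*} [NormedAddCommGroup E] [InnerProductSpace ℝ E]
  [MeasurableSpace E] [BorelSpace E] [SecondCountableTopology E] [CompleteSpace E]
  {Ω : Type*} [MeasureSpace Ω] [IsProbabilityMeasure (volume : Measure Ω)]

local notation "⟪" x ", " y "⟫" => @inner ℝ _ _ x y

open ProbabilityTheory

variable {n : ℕ} (Y : Fin n → Ω → E) (c v : Fin n → ℝ)

lemma mgf_sum_bound (hmeas : ∀ i, Measurable (Y i))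
    (hindep : iIndepFun Y volume)
    (hc : ∀ i, 0 ≤ c i) (hv : ∀ i, 0 ≤ v i)
    (hb : ∀ i, ∀ᵐ ω ∂(volume : Measure Ω), ‖Y i ω‖ ≤ c i)
    (hm : ∀ i, (∫ ω, Y i ω) = 0) (hvar : ∀ i, (∫ ω, ‖Y i ω‖^2) ≤ v i)
    {l : ℝ} (hl : 0 ≤ l) (s : Finset (Fin n)) :
    (∫ ω, Real.cosh (l * ‖∑ i ∈ s, Y i ω‖)) ≤
      ∏ i ∈ s, (1 + l^2 * v i / 2 * Real.exp (l * c i)) := by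
  classical
  induction s using Finset.induction_on with
  | empty => simp [measure_univ]
  | @insert a s ha IH =>
    rw [Finset.prod_insert ha]
    have hUmeas : Measurable (fun ω => ∑ i ∈ s, Y i ω) :=
      Finset.measurable_sum s (fun i _ => hmeas i)
    have hUW : IndepFun (fun ω => ∑ i ∈ s, Y i ω) (Y a) volume := by
      have h := hindep.indepFun_finsetSum_of_notMem hmeas ha
      rwa [show (∑ j ∈ s, Y j) = fun ω => ∑ j ∈ s, Y j ω from
        funext fun ω => Finset.sum_apply ω s Y] at h
    have hUb : ∀ᵐ ω ∂(volume : Measure Ω), ‖∑ i ∈ s, Y i ω‖ ≤ ∑ i ∈ s, c i := by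
      filter_upwards [ae_all_iff.2 hb] with ω hω
      exact le_trans (norm_sum_le s fun i => Y i ω) (Finset.sum_le_sum fun i _ => hω i)
    have key := step_indep (fun ω => ∑ i ∈ s, Y i ω) (Y a) hUmeas (hmeas a) hUW
      hl (hc a) hUb (hb a) (hm a) (hvar a)
    have hKa : (0:ℝ) ≤ 1 + l^2 * v a / 2 * Real.exp (l * c a) := by
      have := hv a; positivity
    calc (∫ ω, Real.cosh (l * ‖∑ i ∈ insert a s, Y i ω‖))
        = ∫ ω, Real.cosh (l * ‖(∑ i ∈ s, Y i ω) + Y a ω‖) := by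
          congr 1; funext ω; rw [Finset.sum_insert ha, add_comm (Y a ω)]
      _ ≤ (∫ ω, Real.cosh (l * ‖∑ i ∈ s, Y i ω‖)) * (1 + l^2 * v a / 2 * Real.exp (l * c a)) :=
          key
      _ ≤ (∏ i ∈ s, (1 + l^2 * v i / 2 * Real.exp (l * c i))) *
            (1 + l^2 * v a / 2 * Real.exp (l * c a)) :=
          mul_le_mul_of_nonneg_right IH hKa
      _ = (1 + l^2 * v a / 2 * Real.exp (l * c a)) *
            ∏ i ∈ s, (1 + l^2 * v i / 2 * Real.exp (l * c i)) := mul_comm _ _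

lemma var_sum_eq (hmeas : ∀ i, Measurable (Y i))
    (hindep : iIndepFun Y volume)
    (hc : ∀ i, 0 ≤ c i)
    (hb : ∀ i, ∀ᵐ ω ∂(volume : Measure Ω), ‖Y i ω‖ ≤ c i)
    (hm : ∀ i, (∫ ω, Y i ω) = 0) (s : Finset (Fin n)) :
    (∫ ω, ‖∑ i ∈ s, Y i ω‖^2) = ∑ i ∈ s, ∫ ω, ‖Y i ω‖^2 := by
  classical
  induction s using Finset.induction_on with
  | empty => simp
  | @insert a s ha IH =>
    have hUmeas : Measurable (fun ω => ∑ i ∈ s, Y i ω) :=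
      Finset.measurable_sum s (fun i _ => hmeas i)
    have hUW : IndepFun (fun ω => ∑ i ∈ s, Y i ω) (Y a) volume := by
      have h := hindep.indepFun_finsetSum_of_notMem hmeas ha
      rwa [show (∑ j ∈ s, Y j) = fun ω => ∑ j ∈ s, Y j ω from
        funext fun ω => Finset.sum_apply ω s Y] at h
    have hUb : ∀ᵐ ω ∂(volume : Measure Ω), ‖∑ i ∈ s, Y i ω‖ ≤ ∑ i ∈ s, c i := by
      filter_upwards [ae_all_iff.2 hb] with ω hω
      exact le_trans (norm_sum_le s fun i => Y i ω) (Finset.sum_le_sum fun i _ => hω i)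
    have hizero : (∫ ω, ⟪(∑ i ∈ s, Y i ω), Y a ω⟫) = 0 :=
      indep_inner_eq_zero _ _ hUmeas (hmeas a) hUW hUb (hc a) (hb a) (hm a)
    -- integrability
    have hIntU2 : Integrable (fun ω => ‖∑ i ∈ s, Y i ω‖^2) (volume : Measure Ω) := by
      apply Integrable.mono' (integrable_const ((∑ i ∈ s, c i)^2))
        (hUmeas.norm.pow_const 2).aestronglyMeasurable
      filter_upwards [hUb] with ω hω
      rw [Real.norm_eq_abs, abs_of_nonneg (sq_nonneg _)]
      exact pow_le_pow_left₀ (norm_nonneg _) hω 2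
    have hIntW2 : Integrable (fun ω => ‖Y a ω‖^2) (volume : Measure Ω) := by
      apply Integrable.mono' (integrable_const ((c a)^2))
        ((hmeas a).norm.pow_const 2).aestronglyMeasurable
      filter_upwards [hb a] with ω hω
      rw [Real.norm_eq_abs, abs_of_nonneg (sq_nonneg _)]
      exact pow_le_pow_left₀ (norm_nonneg _) hω 2
    have hIntInner : Integrable (fun ω => ⟪(∑ i ∈ s, Y i ω), Y a ω⟫) (volume : Measure Ω) := by
      apply Integrable.mono' (integrable_const ((∑ i ∈ s, c i) * c a))
        (hUmeas.inner (hmeas a)).aestronglyMeasurable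
      filter_upwards [hUb, hb a] with ω h1 h2
      rw [Real.norm_eq_abs]
      exact le_trans (abs_real_inner_le_norm _ _)
        (mul_le_mul h1 h2 (norm_nonneg _) (le_trans (norm_nonneg _) h1))
    have hexp : ∀ ω, ‖∑ i ∈ insert a s, Y i ω‖^2
        = ‖∑ i ∈ s, Y i ω‖^2 + 2 * ⟪(∑ i ∈ s, Y i ω), Y a ω⟫ + ‖Y a ω‖^2 := by
      intro ω
      rw [Finset.sum_insert ha, add_comm (Y a ω)]
      exact norm_add_sq_real _ _
    have hint1 : Integrable (fun ω => ‖∑ i ∈ s, Y i ω‖^2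
        + 2 * ⟪(∑ i ∈ s, Y i ω), Y a ω⟫) (volume : Measure Ω) := by
      exact hIntU2.add (hIntInner.const_mul 2)
    calc (∫ ω, ‖∑ i ∈ insert a s, Y i ω‖^2)
        = ∫ ω, (‖∑ i ∈ s, Y i ω‖^2 + 2 * ⟪(∑ i ∈ s, Y i ω), Y a ω⟫ + ‖Y a ω‖^2) := by
          congr 1; funext ω; exact hexp ω
      _ = (∫ ω, (‖∑ i ∈ s, Y i ω‖^2 + 2 * ⟪(∑ i ∈ s, Y i ω), Y a ω⟫)) + ∫ ω, ‖Y a ω‖^2 :=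
          integral_add hint1 hIntW2
      _ = (∫ ω, ‖∑ i ∈ s, Y i ω‖^2) + 2 * (∫ ω, ⟪(∑ i ∈ s, Y i ω), Y a ω⟫) + ∫ ω, ‖Y a ω‖^2 := by
          rw [integral_add hIntU2 (hIntInner.const_mul 2), integral_const_mul]
      _ = (∑ i ∈ s, ∫ ω, ‖Y i ω‖^2) + ∫ ω, ‖Y a ω‖^2 := by
          rw [IH, hizero]; ring
      _ = ∑ i ∈ insert a s, ∫ ω, ‖Y i ω‖^2 := by
          rw [Finset.sum_insert ha]; ring

end Induct

section Numeric

lemma exp_three_quarter_lt : Real.exp (3/4) ≤ 2.13 := by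
  by_contra h
  push_neg at h
  have h4 : Real.exp (3/4) ^ 4 = Real.exp 3 := by
    rw [← Real.exp_nat_mul]; norm_num
  have h3 : Real.exp 3 = Real.exp 1 ^ 3 := by
    rw [← Real.exp_nat_mul]; norm_num
  have hb : (2.13:ℝ)^4 < Real.exp (3/4)^4 :=
    pow_lt_pow_left₀ h (by norm_num) (by norm_num)
  have hc : Real.exp 1 ^ 3 < 2.7182818286^3 :=
    pow_lt_pow_left₀ Real.exp_one_lt_d9 (Real.exp_pos 1).le (by norm_num)
  rw [h4, h3] at hb
  norm_num at hb hc
  linarith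

lemma cheb_numeric {A e2 : ℝ} (hA : 0 < A) (h2 : 2*A ≤ e2) (h8 : e2 ≤ 8*A) :
    A / e2 ≤ Real.exp (-e2/(8*A) + 1/4) := by
  have he2 : 0 < e2 := lt_of_lt_of_le (by linarith) h2
  set t : ℝ := e2 / A with ht_def
  have ht2 : 2 ≤ t := (le_div_iff₀ hA).2 (by linarith)
  have ht8 : t ≤ 8 := (div_le_iff₀ hA).2 (by linarith)
  have hexp_arg : -e2/(8*A) + 1/4 = -(t/8) + 1/4 := by
    rw [ht_def]; field_simp
  rw [hexp_arg]
  have hAe : A / e2 = 1 / t := by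
    rw [ht_def]; field_simp
  rw [hAe]
  have htpos : 0 < t := by linarith
  -- suffices exp (t/8 - 1/4) ≤ t
  have hkey : Real.exp (t/8 - 1/4) ≤ t := by
    set θ : ℝ := (t - 2)/6 with hθ_def
    have hθ0 : 0 ≤ θ := by rw [hθ_def]; linarith
    have hθ1 : θ ≤ 1 := by rw [hθ_def]; linarith
    have harg : t/8 - 1/4 = (1-θ) * 0 + θ * (3/4) := by rw [hθ_def]; ring
    rw [harg]
    have hconv := convexOn_exp.2 (Set.mem_univ (0:ℝ)) (Set.mem_univ (3/4:ℝ))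
      (by linarith : (0:ℝ) ≤ 1 - θ) hθ0 (by ring)
    simp only [smul_eq_mul] at hconv
    calc Real.exp ((1-θ) * 0 + θ * (3/4)) ≤ (1-θ) * Real.exp 0 + θ * Real.exp (3/4) := hconv
      _ ≤ (1-θ) * 1 + θ * 2.13 := by
          rw [Real.exp_zero]
          have := exp_three_quarter_lt
          nlinarith
      _ ≤ 2 + 6*θ := by nlinarith
      _ = t := by rw [hθ_def]; ring
  rw [div_le_iff₀ htpos]
  have harg0 : (-(t/8) + 1/4) + (t/8 - 1/4) = 0 := by ring
  calc (1:ℝ) = Real.exp ((-(t/8) + 1/4) + (t/8 - 1/4)) := by rw [harg0, Real.exp_zero]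
    _ = Real.exp (-(t/8) + 1/4) * Real.exp (t/8 - 1/4) := Real.exp_add _ _
    _ ≤ Real.exp (-(t/8) + 1/4) * t := mul_le_mul_of_nonneg_left hkey (Real.exp_pos _).le

lemma chern_numeric {A V e2 : ℝ} (hA : 0 < A) (hV : 0 < V) (hVA : V ≤ A) (h8 : 8*A ≤ e2) :
    2 * Real.exp (-e2/(2*Real.exp 1*V)) ≤ Real.exp (-e2/(8*A) + 1/4) := by
  have he2 : 0 < e2 := lt_of_lt_of_le (by linarith) h8
  have hE := Real.exp_pos 1
  have heq : 2 * Real.exp (-e2/(2*Real.exp 1*V)) = Real.exp (Real.log 2 + -e2/(2*Real.exp 1*V)) := by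
    rw [Real.exp_add, Real.exp_log two_pos]
  rw [heq, Real.exp_le_exp]
  -- use V ≤ A
  have hmono : e2/(2*Real.exp 1*A) ≤ e2/(2*Real.exp 1*V) :=
    div_le_div_of_nonneg_left he2.le (by positivity) (by nlinarith)
  have hgoal2 : Real.log 2 + -e2/(2*Real.exp 1*A) ≤ -e2/(8*A) + 1/4 → 
      Real.log 2 + -e2/(2*Real.exp 1*V) ≤ -e2/(8*A) + 1/4 := by
    intro h
    have : -e2/(2*Real.exp 1*V) ≤ -e2/(2*Real.exp 1*A) := by
      rw [neg_div, neg_div]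
      linarith
    linarith
  apply hgoal2
  set x : ℝ := e2/(2*Real.exp 1*A) with hx_def
  have hx0 : 0 < x := by rw [hx_def]; positivity
  have hxe : x * (2*Real.exp 1) * A = e2 := by
    rw [hx_def]; field_simp
  have hu8 : 8 ≤ x * (2*Real.exp 1) := by
    nlinarith [hxe]
  have h8A : -e2/(8*A) = -(x * (2*Real.exp 1))/8 := by
    rw [neg_div, neg_div, ← hxe]
    congr 1
    field_simp
  rw [h8A, show -e2/(2*Real.exp 1*A) = -x from by rw [hx_def, neg_div]]
  have hE2 : Real.exp 1 < 2.7182818286 := Real.exp_one_lt_d9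
  have hL : Real.log 2 < 0.6931471808 := Real.log_two_lt_d9
  have hxE : x * Real.exp 1 ≤ x * 2.7182818286 :=
    mul_le_mul_of_nonneg_left hE2.le hx0.le
  nlinarith [hxE, hu8, hx0]

end Numeric

open ProbabilityTheory in
/-- Weighted Vector Bernstein inequality (Corollary A1 of the paper): let `X_1, …, X_n` be
independent mean-zero random vectors in `ℝ^d` with `‖X_i‖ ≤ μ` a.s. and `E[‖X_i‖²] ≤ M`,
and let `w` lie in the probability simplex. With `V_w = Σ w_i² E[‖X_i‖²] > 0`, for every
`ε` with `0 ≤ ε ≤ V_w/(μ·max_i w_i)`,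
`P(‖Σ w_i X_i‖ ≥ ε) ≤ exp(−ε²/(8M Σ w_i²) + 1/4)`. -/
theorem weighted_vector_bernstein
    {Ω : Type*} [MeasureSpace Ω] [IsProbabilityMeasure (volume : Measure Ω)]
    {d : ℕ} (hd : 1 ≤ d) {n : ℕ} (hn : 1 ≤ n)
    (X : Fin n → Ω → EuclideanSpace ℝ (Fin d))
    (hmeas : ∀ i, Measurable (X i))
    (hindep : ProbabilityTheory.iIndepFun X volume)
    (hmean : ∀ i, (∫ ω, X i ω) = 0)
    (μ : ℝ) (hμ : 0 < μ)
    (hbdd : ∀ i, ∀ᵐ ω ∂(volume : Measure Ω), ‖X i ω‖ ≤ μ)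
    (M : ℝ) (hM : 0 < M) (hvar : ∀ i, (∫ ω, ‖X i ω‖ ^ 2) ≤ M)
    (w : Fin n → ℝ) (hw0 : ∀ i, 0 ≤ w i) (hw1 : ∑ i, w i = 1)
    (Vw : ℝ) (hVw : Vw = ∑ i, (w i) ^ 2 * ∫ ω, ‖X i ω‖ ^ 2) (hVwpos : 0 < Vw)
    (ε : ℝ) (hε0 : 0 ≤ ε)
    (hεV : ε ≤ Vw / (μ * Finset.univ.sup' (Finset.univ_nonempty_iff.mpr
      ⟨⟨0, hn⟩⟩) w)) :
    (volume {ω | ε ≤ ‖∑ i, w i • X i ω‖}) ≤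
      ENNReal.ofReal (Real.exp (-(ε ^ 2) / (8 * M * ∑ i, (w i) ^ 2) + 1 / 4)) := by
  classical
  set Y : Fin n → Ω → EuclideanSpace ℝ (Fin d) := fun i ω => w i • X i ω with hY_def
  set s2 : ℝ := ∑ i, (w i)^2 with hs2_def
  set m : ℝ := Finset.univ.sup' (Finset.univ_nonempty_iff.mpr ⟨⟨0, hn⟩⟩) w with hm_def
  have hwm : ∀ i, w i ≤ m := fun i => Finset.le_sup' w (Finset.mem_univ i)
  obtain ⟨i0, hi0⟩ : ∃ i, 0 < w i := by
    by_contra h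
    push_neg at h
    have h0 : (∑ i, w i) = 0 := Finset.sum_eq_zero fun i _ => le_antisymm (h i) (hw0 i)
    rw [hw1] at h0; norm_num at h0
  have hmpos : 0 < m := lt_of_lt_of_le hi0 (hwm i0)
  have hs2pos : 0 < s2 := by
    have h1 : (w i0)^2 ≤ ∑ i, (w i)^2 :=
      Finset.single_le_sum (f := fun i => (w i)^2) (fun i _ => sq_nonneg _) (Finset.mem_univ i0)
    rw [hs2_def]
    nlinarith
  have hMs2 : 0 < M * s2 := mul_pos hM hs2pos
  -- properties of Y
  have hYmeas : ∀ i, Measurable (Y i) := fun i => (hmeas i).const_smul (w i)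
  have hYindep : iIndepFun Y volume :=
    hindep.comp (fun i (x : EuclideanSpace ℝ (Fin d)) => w i • x)
      (fun i => measurable_const_smul (w i))
  have hYb : ∀ i, ∀ᵐ ω ∂(volume : Measure Ω), ‖Y i ω‖ ≤ w i * μ := by
    intro i
    filter_upwards [hbdd i] with ω hω
    simp only [hY_def, norm_smul, Real.norm_eq_abs, abs_of_nonneg (hw0 i)]
    exact mul_le_mul_of_nonneg_left hω (hw0 i)
  have hYc0 : ∀ i, 0 ≤ w i * μ := fun i => mul_nonneg (hw0 i) hμ.le
  have hYm : ∀ i, (∫ ω, Y i ω) = 0 := by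
    intro i
    simp only [hY_def]
    rw [integral_smul, hmean i, smul_zero]
  have hYvar_eq : ∀ i, (∫ ω, ‖Y i ω‖^2) = (w i)^2 * ∫ ω, ‖X i ω‖^2 := by
    intro i
    simp only [hY_def, norm_smul, Real.norm_eq_abs, abs_of_nonneg (hw0 i), mul_pow]
    exact integral_const_mul _ _
  have hXvar_nonneg : ∀ i, 0 ≤ ∫ ω, ‖X i ω‖^2 := fun i => integral_nonneg fun ω => sq_nonneg _
  have hYv0 : ∀ i, 0 ≤ (w i)^2 * ∫ ω, ‖X i ω‖^2 :=
    fun i => mul_nonneg (sq_nonneg _) (hXvar_nonneg i)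
  have hVw_eq : Vw = ∑ i, ∫ ω, ‖Y i ω‖^2 := by
    rw [hVw]
    exact Finset.sum_congr rfl fun i _ => (hYvar_eq i).symm
  have hVwMs2 : Vw ≤ M * s2 := by
    rw [hVw]
    calc ∑ i, (w i)^2 * ∫ ω, ‖X i ω‖^2 ≤ ∑ i, (w i)^2 * M :=
        Finset.sum_le_sum fun i _ => mul_le_mul_of_nonneg_left (hvar i) (sq_nonneg _)
      _ = M * s2 := by
        rw [hs2_def, Finset.mul_sum]
        exact Finset.sum_congr rfl fun i _ => mul_comm _ _
  have hSmeas : Measurable (fun ω => ∑ i, Y i ω) :=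
    Finset.measurable_sum _ (fun i _ => hYmeas i)
  have hSb : ∀ᵐ ω ∂(volume : Measure Ω), ‖∑ i, Y i ω‖ ≤ μ := by
    filter_upwards [ae_all_iff.2 hYb] with ω hω
    calc ‖∑ i, Y i ω‖ ≤ ∑ i, ‖Y i ω‖ := norm_sum_le _ _
      _ ≤ ∑ i, w i * μ := Finset.sum_le_sum fun i _ => hω i
      _ = μ := by rw [← Finset.sum_mul, hw1, one_mul]
  have hsetY : {ω | ε ≤ ‖∑ i, w i • X i ω‖} = {ω | ε ≤ ‖∑ i, Y i ω‖} := rfl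
  have hPfin : volume {ω | ε ≤ ‖∑ i, w i • X i ω‖} ≠ ⊤ := measure_ne_top _ _
  have hexp_eq : -(ε ^ 2) / (8 * M * s2) + 1/4 = -ε^2/(8*(M*s2)) + 1/4 := by ring
  suffices h : (volume {ω | ε ≤ ‖∑ i, w i • X i ω‖}).toReal ≤
      Real.exp (-(ε ^ 2) / (8 * M * s2) + 1 / 4) by
    rw [← ENNReal.ofReal_toReal hPfin]
    exact ENNReal.ofReal_le_ofReal h
  rcases le_or_gt (ε^2) (2*(M*s2)) with hcase1 | hcase1
  · -- trivial case
    have h1 : (volume {ω | ε ≤ ‖∑ i, w i • X i ω‖}).toReal ≤ 1 := by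
      have h2 : volume {ω | ε ≤ ‖∑ i, w i • X i ω‖} ≤ 1 := prob_le_one
      have := ENNReal.toReal_mono (by norm_num) h2
      simpa using this
    refine le_trans h1 ?_
    have harg : 0 ≤ -(ε^2)/(8*M*s2) + 1/4 := by
      rw [neg_div]
      have h3 : ε^2/(8*M*s2) ≤ 1/4 := by
        rw [div_le_iff₀ (by positivity)]
        nlinarith
      linarith
    calc (1:ℝ) = Real.exp 0 := Real.exp_zero.symm
      _ ≤ _ := Real.exp_le_exp.2 harg
  have hε2pos : 0 < ε^2 := lt_trans (by positivity) hcase1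
  have hεpos : 0 < ε := by nlinarith
  rcases le_or_gt (ε^2) (8*(M*s2)) with hcase2 | hcase2
  · -- Chebyshev case
    have hS2int : Integrable (fun ω => ‖∑ i, Y i ω‖^2) (volume : Measure Ω) := by
      apply Integrable.mono' (integrable_const (μ^2))
        (hSmeas.norm.pow_const 2).aestronglyMeasurable
      filter_upwards [hSb] with ω hω
      rw [Real.norm_eq_abs, abs_of_nonneg (sq_nonneg _)]
      exact pow_le_pow_left₀ (norm_nonneg _) hω 2
    have hvar_sum : (∫ ω, ‖∑ i, Y i ω‖^2) = Vw := by
      rw [var_sum_eq Y (fun i => w i * μ) hYmeas hYindep hYc0 hYb hYm Finset.univ, hVw_eq]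
    have hcheb := mul_meas_ge_le_integral_of_nonneg (μ := (volume : Measure Ω))
      (f := fun ω => ‖∑ i, Y i ω‖^2) (ae_of_all _ fun ω => sq_nonneg _) hS2int (ε^2)
    have hsub : {ω | ε ≤ ‖∑ i, w i • X i ω‖} ⊆ {ω | ε^2 ≤ ‖∑ i, Y i ω‖^2} := by
      intro ω hω
      simp only [Set.mem_setOf_eq] at *
      exact pow_le_pow_left₀ hε0 hω 2
    have hPle : (volume {ω | ε ≤ ‖∑ i, w i • X i ω‖}).toReal ≤
        (volume {ω | ε^2 ≤ ‖∑ i, Y i ω‖^2}).toReal :=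
      ENNReal.toReal_mono (measure_ne_top _ _) (measure_mono hsub)
    have hP2 : (volume {ω | ε^2 ≤ ‖∑ i, Y i ω‖^2}).toReal ≤ (M*s2) / ε^2 := by
      rw [le_div_iff₀ hε2pos]
      calc (volume {ω | ε^2 ≤ ‖∑ i, Y i ω‖^2}).toReal * ε^2
          = ε^2 * (volume {ω | ε^2 ≤ ‖∑ i, Y i ω‖^2}).toReal := mul_comm _ _
        _ ≤ ∫ ω, ‖∑ i, Y i ω‖^2 := hcheb
        _ = Vw := hvar_sum
        _ ≤ M*s2 := hVwMs2
    rw [hexp_eq]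
    calc (volume {ω | ε ≤ ‖∑ i, w i • X i ω‖}).toReal ≤ (M*s2) / ε^2 :=
        le_trans hPle hP2
      _ ≤ Real.exp (-ε^2/(8*(M*s2)) + 1/4) := cheb_numeric hMs2 (le_of_lt hcase1) hcase2
  · -- Chernoff case
    set l0 : ℝ := ε / (Real.exp 1 * Vw) with hl0_def
    have hl0 : 0 ≤ l0 := div_nonneg hε0 (by positivity)
    have hbpos : 0 < μ * m := mul_pos hμ hmpos
    have hεb : ε * (μ * m) ≤ Vw := (le_div_iff₀ hbpos).1 hεV
    have hl0b : ∀ i, l0 * (w i * μ) ≤ 1 := by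
      intro i
      have h1 : w i * μ ≤ μ * m := by
        rw [mul_comm μ m]
        exact mul_le_mul_of_nonneg_right (hwm i) hμ.le
      have h2 : l0 * (w i * μ) ≤ l0 * (μ * m) := mul_le_mul_of_nonneg_left h1 hl0
      refine le_trans h2 ?_
      rw [hl0_def, div_mul_eq_mul_div, div_le_one (by positivity)]
      have he1 : (1:ℝ) ≤ Real.exp 1 := by
        have := Real.add_one_le_exp (1:ℝ)
        linarith
      nlinarith
    have hmgf := mgf_sum_bound Y (fun i => w i * μ) (fun i => (w i)^2 * ∫ ω, ‖X i ω‖^2)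
      hYmeas hYindep hYc0 hYv0 hYb hYm (fun i => le_of_eq (hYvar_eq i)) hl0 Finset.univ
    have hprod_le : (∏ i, (1 + l0^2 * ((w i)^2 * ∫ ω, ‖X i ω‖^2) / 2 * Real.exp (l0 * (w i * μ))))
        ≤ Real.exp (l0^2 * Real.exp 1 / 2 * Vw) := by
      have hfac : ∀ i ∈ Finset.univ,
          (1 + l0^2 * ((w i)^2 * ∫ ω, ‖X i ω‖^2) / 2 * Real.exp (l0 * (w i * μ)))
          ≤ Real.exp ((l0^2 * Real.exp 1 / 2) * ((w i)^2 * ∫ ω, ‖X i ω‖^2)) := by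
        intro i _
        have hee : Real.exp (l0 * (w i * μ)) ≤ Real.exp 1 := Real.exp_le_exp.2 (hl0b i)
        have hv := hYv0 i
        have h2 : l0^2 * ((w i)^2 * ∫ ω, ‖X i ω‖^2) / 2 * Real.exp (l0 * (w i * μ))
            ≤ l0^2 * ((w i)^2 * ∫ ω, ‖X i ω‖^2) / 2 * Real.exp 1 :=
          mul_le_mul_of_nonneg_left hee (by positivity)
        have h3 : l0^2 * ((w i)^2 * ∫ ω, ‖X i ω‖^2) / 2 * Real.exp 1
            = (l0^2 * Real.exp 1 / 2) * ((w i)^2 * ∫ ω, ‖X i ω‖^2) := by ring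
        have h4 := Real.add_one_le_exp ((l0^2 * Real.exp 1 / 2) * ((w i)^2 * ∫ ω, ‖X i ω‖^2))
        linarith
      calc (∏ i, (1 + l0^2 * ((w i)^2 * ∫ ω, ‖X i ω‖^2) / 2 * Real.exp (l0 * (w i * μ))))
          ≤ ∏ i, Real.exp ((l0^2 * Real.exp 1 / 2) * ((w i)^2 * ∫ ω, ‖X i ω‖^2)) :=
            Finset.prod_le_prod (fun i _ => by have := hYv0 i; positivity) hfac
        _ = Real.exp (∑ i, (l0^2 * Real.exp 1 / 2) * ((w i)^2 * ∫ ω, ‖X i ω‖^2)) :=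
            (Real.exp_sum _ _).symm
        _ = Real.exp (l0^2 * Real.exp 1 / 2 * Vw) := by rw [← Finset.mul_sum, ← hVw]
    have hcoshint : Integrable (fun ω => Real.cosh (l0 * ‖∑ i, Y i ω‖)) (volume : Measure Ω) := by
      apply Integrable.mono' (integrable_const (Real.cosh (l0 * μ)))
        (Real.continuous_cosh.measurable.comp (hSmeas.norm.const_mul l0)).aestronglyMeasurable
      filter_upwards [hSb] with ω hω
      simp only [Function.comp_apply]
      rw [Real.norm_eq_abs, abs_of_pos (Real.cosh_pos _), Real.cosh_le_cosh,
        abs_of_nonneg (by positivity), abs_of_nonneg (by positivity)]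
      exact mul_le_mul_of_nonneg_left hω hl0
    have hmark := mul_meas_ge_le_integral_of_nonneg (μ := (volume : Measure Ω))
      (f := fun ω => Real.cosh (l0 * ‖∑ i, Y i ω‖)) (ae_of_all _ fun ω => (Real.cosh_pos _).le)
      hcoshint (Real.cosh (l0 * ε))
    have hsub : {ω | ε ≤ ‖∑ i, w i • X i ω‖}
        ⊆ {ω | Real.cosh (l0*ε) ≤ Real.cosh (l0 * ‖∑ i, Y i ω‖)} := by
      intro ω hω
      simp only [Set.mem_setOf_eq] at *
      rw [Real.cosh_le_cosh, abs_of_nonneg (by positivity), abs_of_nonneg (by positivity)]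
      exact mul_le_mul_of_nonneg_left hω hl0
    have hPle : (volume {ω | ε ≤ ‖∑ i, w i • X i ω‖}).toReal ≤
        (volume {ω | Real.cosh (l0*ε) ≤ Real.cosh (l0 * ‖∑ i, Y i ω‖)}).toReal :=
      ENNReal.toReal_mono (measure_ne_top _ _) (measure_mono hsub)
    have hchain : (volume {ω | ε ≤ ‖∑ i, w i • X i ω‖}).toReal * Real.cosh (l0*ε)
        ≤ Real.exp (l0^2 * Real.exp 1 / 2 * Vw) := by
      have hcp := (Real.cosh_pos (l0*ε)).le
      calc (volume {ω | ε ≤ ‖∑ i, w i • X i ω‖}).toReal * Real.cosh (l0*ε)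
          ≤ (volume {ω | Real.cosh (l0*ε) ≤ Real.cosh (l0 * ‖∑ i, Y i ω‖)}).toReal
            * Real.cosh (l0*ε) := mul_le_mul_of_nonneg_right hPle hcp
        _ = Real.cosh (l0*ε) *
            (volume {ω | Real.cosh (l0*ε) ≤ Real.cosh (l0 * ‖∑ i, Y i ω‖)}).toReal := mul_comm _ _
        _ ≤ ∫ ω, Real.cosh (l0 * ‖∑ i, Y i ω‖) := hmark
        _ ≤ _ := le_trans hmgf hprod_le
    have hcosh_ge : Real.exp (l0*ε)/2 ≤ Real.cosh (l0*ε) := by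
      rw [Real.cosh_eq]
      have := (Real.exp_pos (-(l0*ε))).le
      linarith
    have hepos : (0:ℝ) < Real.exp (l0*ε) := Real.exp_pos _
    have hPnn : (0:ℝ) ≤ (volume {ω | ε ≤ ‖∑ i, w i • X i ω‖}).toReal := ENNReal.toReal_nonneg
    have h4 : (volume {ω | ε ≤ ‖∑ i, w i • X i ω‖}).toReal * (Real.exp (l0*ε)/2)
        ≤ Real.exp (l0^2 * Real.exp 1 / 2 * Vw) :=
      le_trans (mul_le_mul_of_nonneg_left hcosh_ge hPnn) hchain
    have h5 : (volume {ω | ε ≤ ‖∑ i, w i • X i ω‖}).toReal * Real.exp (l0*ε)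
        ≤ 2 * Real.exp (l0^2 * Real.exp 1 / 2 * Vw) := by linarith
    have h6 : (volume {ω | ε ≤ ‖∑ i, w i • X i ω‖}).toReal
        ≤ 2 * Real.exp (l0^2 * Real.exp 1 / 2 * Vw) / Real.exp (l0*ε) :=
      (le_div_iff₀ hepos).2 h5
    have hSeq : l0^2 * Real.exp 1 / 2 * Vw - l0*ε = -ε^2/(2*Real.exp 1*Vw) := by
      rw [hl0_def]
      field_simp
      ring
    rw [hexp_eq]
    calc (volume {ω | ε ≤ ‖∑ i, w i • X i ω‖}).toReal
        ≤ 2 * Real.exp (l0^2 * Real.exp 1 / 2 * Vw) / Real.exp (l0*ε) := h6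
      _ = 2 * Real.exp (l0^2 * Real.exp 1 / 2 * Vw - l0*ε) := by
          rw [Real.exp_sub]; ring
      _ = 2 * Real.exp (-ε^2/(2*Real.exp 1*Vw)) := by rw [hSeq]
      _ ≤ Real.exp (-ε^2/(8*(M*s2)) + 1/4) := chern_numeric hMs2 hVwpos hVwMs2 (le_of_lt hcase2)
end
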